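/- With the notation of the previous statement, define for a measurable function h : ℝ → ℝ the sets N_h = {x : h(x) = 0} and E_h = {x : ∫_U h(y)⁻² dy = +∞ for every open set U containing x}. Then N_σᶜ = G(N_bᶜ) and E_σᶜ = G(E_{b/√f}ᶜ), where σ = (b/f) ∘ H. -/

import Mathlib

open MeasureTheory

/-- The primitive `G(x) = ∫₀ˣ (1/f)(y) dy` of the reciprocal of a drift
function `f` (with the convention `1/0 = ∞`). -/
noncomputable def primInv (f : ℝ → ℝ) (x : ℝ) : ℝ :=
  (∫⁻ y in Set.Ioc 0 x, (ENNReal.ofReal (f y))⁻¹ ∂volume).toReal -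
    (∫⁻ y in Set.Ioc x 0, (ENNReal.ofReal (f y))⁻¹ ∂volume).toReal

namespace PrimInvAux

open Set ENNReal

variable {f : ℝ → ℝ}

/-- The measure with density `1/f` with respect to Lebesgue measure. -/
noncomputable def nuD (f : ℝ → ℝ) : Measure ℝ :=
  volume.withDensity fun y => (ENNReal.ofReal (f y))⁻¹

lemma meas_of_bv (hbv : LocallyBoundedVariationOn f Set.univ) :
    Measurable f := by
  obtain ⟨p, q, hp, hq, h⟩ := hbv.exists_monotoneOn_sub_monotoneOn
  rw [h]
  exact ((monotoneOn_univ.1 hp).measurable).sub ((monotoneOn_univ.1 hq).measurable)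

lemma nuD_apply (f : ℝ → ℝ) {s : Set ℝ} (hs : MeasurableSet s) :
    nuD f s = ∫⁻ x in s, (ENNReal.ofReal (f x))⁻¹ ∂volume :=
  withDensity_apply _ hs

variable (hint : ∀ K : Set ℝ, IsCompact K →
      ∫⁻ x in K, (ENNReal.ofReal (f x))⁻¹ ∂volume < ⊤)
include hint

lemma nuD_Icc_ne_top (a b : ℝ) : nuD f (Set.Icc a b) ≠ ⊤ := by
  rw [nuD_apply f measurableSet_Icc]
  exact (hint _ isCompact_Icc).ne

lemma nuD_Ioc_ne_top (a b : ℝ) : nuD f (Set.Ioc a b) ≠ ⊤ :=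
  fun h => nuD_Icc_ne_top hint a b (eq_top_iff.2 (h ▸ measure_mono Set.Ioc_subset_Icc_self))

omit hint in
lemma nuD_add {a b c : ℝ} (hab : a ≤ b) (hbc : b ≤ c) :
    nuD f (Set.Ioc a c) = nuD f (Set.Ioc a b) + nuD f (Set.Ioc b c) := by
  rw [← Set.Ioc_union_Ioc_eq_Ioc hab hbc,
    measure_union (Set.Ioc_disjoint_Ioc.2 (le_trans (min_le_left _ _) (le_max_right _ _)))
      measurableSet_Ioc]

omit hint in
lemma primInv_eq (x : ℝ) :
    primInv f x = (nuD f (Set.Ioc 0 x)).toReal - (nuD f (Set.Ioc x 0)).toReal := by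
  rw [primInv, nuD_apply f measurableSet_Ioc, nuD_apply f measurableSet_Ioc]

lemma primInv_add {s t : ℝ} (hst : s ≤ t) :
    primInv f t = primInv f s + (nuD f (Set.Ioc s t)).toReal := by
  have hfin := nuD_Ioc_ne_top hint
  rcases le_total 0 s with hs | hs
  · have ht : (0:ℝ) ≤ t := hs.trans hst
    rw [primInv_eq, primInv_eq, Set.Ioc_eq_empty (not_lt.2 hs), Set.Ioc_eq_empty (not_lt.2 ht),
      nuD_add hs hst, ENNReal.toReal_add (hfin _ _) (hfin _ _)]
    simp
  · rcases le_total t 0 with ht | ht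
    · rw [primInv_eq, primInv_eq, Set.Ioc_eq_empty (not_lt.2 (hst.trans ht)),
        Set.Ioc_eq_empty (not_lt.2 ht), nuD_add hst ht,
        ENNReal.toReal_add (hfin _ _) (hfin _ _)]
      simp
    · rw [primInv_eq, primInv_eq, Set.Ioc_eq_empty (not_lt.2 hs), Set.Ioc_eq_empty (not_lt.2 ht),
        nuD_add hs ht, ENNReal.toReal_add (hfin _ _) (hfin _ _)]
      simp

lemma primInv_mono : Monotone (primInv f) := fun s t hst => by
  rw [primInv_add hint hst]
  exact le_add_of_nonneg_right ENNReal.toReal_nonneg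

omit hint in
lemma iInter_Icc_eq_singleton (x : ℝ) :
    (⋂ n : ℕ, Set.Icc (x - 1/(n+1)) (x + 1/(n+1))) = {x} := by
  ext y
  simp only [Set.mem_iInter, Set.mem_Icc, Set.mem_singleton_iff]
  constructor
  · intro h
    have habs : ∀ n : ℕ, |y - x| ≤ 1/(n+1 : ℝ) := by
      intro n
      rw [abs_sub_le_iff]
      constructor <;> linarith [(h n).1, (h n).2]
    have h0 : |y - x| ≤ 0 :=
      ge_of_tendsto tendsto_one_div_add_atTop_nhds_zero_nat (Filter.Eventually.of_forall habs)
    have h1 := abs_nonneg (y - x)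
    have h2 := abs_eq_zero.1 (le_antisymm h0 h1)
    linarith
  · rintro rfl
    intro n
    have hpos : (0:ℝ) < 1/(n+1) := by positivity
    constructor <;> linarith

lemma primInv_continuous : Continuous (primInv f) := by
  rw [Metric.continuous_iff]
  intro x ε hε
  set S : ℕ → Set ℝ := fun n => Set.Icc (x - 1/(n+1)) (x + 1/(n+1)) with hS
  have hanti : Antitone S := by
    intro n m hnm
    have h1 : 1/((m:ℝ)+1) ≤ 1/((n:ℝ)+1) := by
      apply one_div_le_one_div_of_le
      · positivity
      · exact_mod_cast by simpa using hnm
    exact Set.Icc_subset_Icc (by linarith) (by linarith)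
  have hsing : nuD f {x} = 0 := by
    rw [nuD, withDensity_apply _ (measurableSet_singleton x)]
    exact setLIntegral_measure_zero _ _ Real.volume_singleton
  have htend := tendsto_measure_iInter_atTop (μ := nuD f)
    (fun n => measurableSet_Icc.nullMeasurableSet) hanti ⟨0, nuD_Icc_ne_top hint _ _⟩
  rw [show (⋂ n, S n) = {x} from iInter_Icc_eq_singleton x, hsing] at htend
  obtain ⟨n, hn⟩ := (htend.eventually (gt_mem_nhds (ENNReal.ofReal_pos.2 hε))).exists
  refine ⟨1/(n+1), by positivity, fun y hy => ?_⟩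
  have hyx : |y - x| < 1/(n+1) := by rwa [Real.dist_eq] at hy
  have key : ∀ a b : ℝ, a ≤ b → Set.Ioc a b ⊆ S n →
      dist (primInv f b) (primInv f a) < ε := by
    intro a b hab hsub
    rw [primInv_add hint hab, Real.dist_eq, add_sub_cancel_left,
      abs_of_nonneg ENNReal.toReal_nonneg]
    have h1 : nuD f (Set.Ioc a b) ≤ nuD f (S n) := measure_mono hsub
    have h2 : (nuD f (Set.Ioc a b)).toReal ≤ (nuD f (S n)).toReal :=
      ENNReal.toReal_mono (nuD_Icc_ne_top hint _ _) h1
    have h3 : (nuD f (S n)).toReal < ε :=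
      (ENNReal.lt_ofReal_iff_toReal_lt (nuD_Icc_ne_top hint _ _)).1 hn
    linarith
  rcases le_total y x with h | h
  · rw [dist_comm]
    refine key y x h fun z hz => ?_
    rcases hz with ⟨h1, h2⟩
    have := abs_lt.1 hyx
    exact ⟨by linarith [this.1], by linarith⟩
  · refine key x y h fun z hz => ?_
    rcases hz with ⟨h1, h2⟩
    have := abs_lt.1 hyx
    exact ⟨by linarith, by linarith [this.2]⟩

variable (hs : StrictMono (primInv f))
include hs

omit hs in
lemma range_ordConnected : (Set.range (primInv f)).OrdConnected := by
  rw [← Set.image_univ]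
  exact (isPreconnected_univ.image _ (primInv_continuous hint).continuousOn).ordConnected

omit hs in
lemma Icc_subset_range {a b : ℝ} :
    Set.Icc (primInv f a) (primInv f b) ⊆ Set.range (primInv f) :=
  (range_ordConnected hint).out ⟨a, rfl⟩ ⟨b, rfl⟩

omit hs in
lemma nuD_Ioc_eq {a b : ℝ} (h : a ≤ b) :
    nuD f (Set.Ioc a b) = ENNReal.ofReal (primInv f b - primInv f a) := by
  have := primInv_add hint h
  rw [show primInv f b - primInv f a = (nuD f (Set.Ioc a b)).toReal by linarith,
    ENNReal.ofReal_toReal (nuD_Ioc_ne_top hint a b)]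

omit hint in
lemma primInv_preimage_Ioc (a b : ℝ) :
    primInv f ⁻¹' Set.Ioc (primInv f a) (primInv f b) = Set.Ioc a b := by
  ext x
  simp [Set.mem_Ioc, hs.lt_iff_lt, hs.le_iff_le]

lemma rangeG_eq_iUnion :
    Set.range (primInv f)
      = ⋃ n : ℕ, Set.Ioc (primInv f (-(n:ℝ) - 1)) (primInv f (n:ℝ)) := by
  apply Set.Subset.antisymm
  · rintro _ ⟨t, rfl⟩
    refine Set.mem_iUnion.2 ⟨⌈|t|⌉₊, ?_, ?_⟩
    · apply hs
      have h1 : |t| ≤ (⌈|t|⌉₊ : ℝ) := Nat.le_ceil _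
      have h2 := neg_abs_le t
      linarith
    · apply hs.monotone
      have h1 : |t| ≤ (⌈|t|⌉₊ : ℝ) := Nat.le_ceil _
      have h2 := le_abs_self t
      linarith
  · refine Set.iUnion_subset fun n => ?_
    exact fun y hy => Icc_subset_range hint (Set.Ioc_subset_Icc_self hy)

lemma map_nuD :
    Measure.map (primInv f) (nuD f) = volume.restrict (Set.range (primInv f)) := by
  have hGcont := primInv_continuous hint
  symm
  refine Measure.ext_of_Ioc' _ _ (fun c d _ => ?_) (fun c d hcd => ?_)
  · exact fun h => (measure_Ioc_lt_top (a := c) (b := d)).ne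
      (eq_top_iff.2 (h ▸ Measure.restrict_apply_le _ _))
  · rw [Measure.restrict_apply measurableSet_Ioc,
      Measure.map_apply hGcont.measurable measurableSet_Ioc]
    have hpre : primInv f ⁻¹' Set.Ioc c d
        = primInv f ⁻¹' (Set.Ioc c d ∩ Set.range (primInv f)) := by
      rw [Set.preimage_inter, Set.preimage_range, Set.inter_univ]
    rw [hpre, rangeG_eq_iUnion hint hs, Set.inter_iUnion, Set.preimage_iUnion]
    have hmono : Monotone fun n : ℕ =>
        Set.Ioc c d ∩ Set.Ioc (primInv f (-(n:ℝ) - 1)) (primInv f (n:ℝ)) := by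
      intro n m hnm
      have hc : ((n:ℝ)) ≤ (m:ℝ) := Nat.cast_le.2 hnm
      exact Set.inter_subset_inter_right _
        (Set.Ioc_subset_Ioc (hs.monotone (by linarith)) (hs.monotone hc))
    have hmono2 : Monotone fun n : ℕ =>
        primInv f ⁻¹' (Set.Ioc c d ∩ Set.Ioc (primInv f (-(n:ℝ) - 1)) (primInv f (n:ℝ))) :=
      fun n m hnm => Set.preimage_mono (hmono hnm)
    rw [hmono.measure_iUnion, hmono2.measure_iUnion]
    congr 1
    funext n
    rw [Set.Ioc_inter_Ioc]
    rcases le_or_gt (d ⊓ primInv f (n:ℝ)) (c ⊔ primInv f (-(n:ℝ) - 1)) with h | h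
    · rw [Set.Ioc_eq_empty (not_lt.2 h)]
      simp
    · obtain ⟨a, ha⟩ := Icc_subset_range hint (a := -(n:ℝ)-1) (b := (n:ℝ))
        ⟨le_sup_right, h.le.trans inf_le_right⟩
      obtain ⟨bb, hbb⟩ := Icc_subset_range hint (a := -(n:ℝ)-1) (b := (n:ℝ))
        ⟨le_trans le_sup_right h.le, inf_le_right⟩
      rw [← ha, ← hbb, primInv_preimage_Ioc hs, Real.volume_Ioc,
        nuD_Ioc_eq hint (hs.le_iff_le.1 (by rw [ha, hbb]; exact h.le))]

omit hs in
lemma w_ae_lt_top (hm : Measurable f) :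
    ∀ᵐ x ∂(volume : Measure ℝ), (ENNReal.ofReal (f x))⁻¹ < ⊤ := by
  have w_meas : Measurable fun y => (ENNReal.ofReal (f y))⁻¹ := hm.ennreal_ofReal.inv
  rw [ae_iff]
  have hN : MeasurableSet {x : ℝ | ¬ (ENNReal.ofReal (f x))⁻¹ < ⊤} :=
    (measurableSet_lt w_meas measurable_const).compl
  have hsub : {x : ℝ | ¬ (ENNReal.ofReal (f x))⁻¹ < ⊤} ⊆
      ⋃ n : ℕ, {x : ℝ | ¬ (ENNReal.ofReal (f x))⁻¹ < ⊤} ∩ Set.Icc (-(n:ℝ)) n := by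
    intro x hx
    refine Set.mem_iUnion.2 ⟨⌈|x|⌉₊, hx, ?_, ?_⟩
    · have := Nat.le_ceil |x|; have := neg_abs_le x; linarith
    · have := Nat.le_ceil |x|; have := le_abs_self x; linarith
  refine measure_mono_null hsub (measure_iUnion_null fun n => ?_)
  have h1 := ae_lt_top w_meas (hint (Set.Icc (-(n:ℝ)) n) isCompact_Icc).ne
  rw [ae_iff] at h1
  rwa [Measure.restrict_apply hN] at h1

lemma primInv_image_Ioo (a b : ℝ) (hab : a ≤ b) :
    primInv f '' Set.Ioo a b = Set.Ioo (primInv f a) (primInv f b) := by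
  apply Set.Subset.antisymm
  · rintro _ ⟨t, ht, rfl⟩
    exact ⟨hs ht.1, hs ht.2⟩
  · exact intermediate_value_Ioo hab (primInv_continuous hint).continuousOn

lemma primInv_isOpenMap : IsOpenMap (primInv f) := by
  intro V hV
  rw [isOpen_iff_forall_mem_open]
  rintro _ ⟨t, ht, rfl⟩
  obtain ⟨ε, hε, hball⟩ := Metric.isOpen_iff.1 hV t ht
  refine ⟨Set.Ioo (primInv f (t - ε)) (primInv f (t + ε)), ?_, isOpen_Ioo,
    hs (by linarith), hs (by linarith)⟩
  rw [← primInv_image_Ioo hint hs _ _ (by linarith)]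
  apply Set.image_mono
  rw [← Real.ball_eq_Ioo]
  exact hball

lemma subst_lemma (hm : Measurable f) {V : Set ℝ} (hV : MeasurableSet V) (g : ℝ → ℝ≥0∞) :
    ∫⁻ y in primInv f '' V, g y ∂volume
      = ∫⁻ t in V, (ENNReal.ofReal (f t))⁻¹ * g (primInv f t) ∂volume := by
  have w_meas : Measurable fun y => (ENNReal.ofReal (f y))⁻¹ := hm.ennreal_ofReal.inv
  have hemb : MeasurableEmbedding (primInv f) :=
    (primInv_continuous hint).measurableEmbedding hs.injective
  have hVim : MeasurableSet (primInv f '' V) := hemb.measurableSet_image' hV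
  have h1 : ∫⁻ y in primInv f '' V, g y ∂volume
      = ∫⁻ y in primInv f '' V, g y ∂(volume.restrict (Set.range (primInv f))) := by
    rw [Measure.restrict_restrict hVim,
      Set.inter_eq_left.2 (Set.image_subset_range _ _)]
  rw [h1, ← map_nuD hint hs, ← lintegral_indicator hVim, hemb.lintegral_map]
  have h2 : ∀ t, (primInv f '' V).indicator g (primInv f t)
      = V.indicator (fun t => g (primInv f t)) t := by
    intro t
    by_cases ht : t ∈ V
    · rw [Set.indicator_of_mem ht, Set.indicator_of_mem (Set.mem_image_of_mem _ ht)]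
    · rw [Set.indicator_of_notMem ht, Set.indicator_of_notMem
        (fun hmem => ht ((hs.injective.mem_set_image).1 hmem))]
  rw [lintegral_congr h2, lintegral_indicator hV, nuD,
    setLIntegral_withDensity_eq_setLIntegral_mul_non_measurable _ w_meas _ hV
      (ae_restrict_of_ae (w_ae_lt_top hint hm))]
  rfl

omit hint hs in
lemma not_range_interval {y ε : ℝ} (hε : 0 < ε)
    (hyr : y ∉ Set.range (primInv f))
    (hord : (Set.range (primInv f)).OrdConnected) :
    ∃ S : Set ℝ, MeasurableSet S ∧ S ⊆ Metric.ball y ε ∧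
      (∀ z ∈ S, z ∉ Set.range (primInv f)) ∧ volume S = ENNReal.ofReal ε := by
  by_cases hall : ∀ p ∈ Set.range (primInv f), y < p
  · refine ⟨Set.Ioc (y - ε) y, measurableSet_Ioc, ?_, ?_, ?_⟩
    · intro z hz
      rw [Real.ball_eq_Ioo]
      exact ⟨hz.1, lt_of_le_of_lt hz.2 (by linarith)⟩
    · intro z hz hzr
      exact absurd (hall z hzr) (not_lt.2 hz.2)
    · rw [Real.volume_Ioc]; congr 1; ring
  · push_neg at hall
    obtain ⟨p, hp, hpy⟩ := hall
    have hlt : ∀ q ∈ Set.range (primInv f), q < y := by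
      intro q hq
      rcases lt_or_ge q y with h | h
      · exact h
      · exact absurd (hord.out hp hq ⟨hpy, h⟩) hyr
    refine ⟨Set.Ico y (y + ε), measurableSet_Ico, ?_, ?_, ?_⟩
    · intro z hz
      rw [Real.ball_eq_Ioo]
      exact ⟨lt_of_lt_of_le (by linarith) hz.1, hz.2⟩
    · intro z hz hzr
      exact absurd (hlt z hzr) (not_lt.2 hz.1)
    · rw [Real.volume_Ico]; congr 1; ring

end PrimInvAux

open PrimInvAux ENNReal

open Classical in
/-- With `σ = (b/f) ∘ H` (extended by `b(±∞) = 0` outside `G(ℝ)`):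
`N_σᶜ = G(N_bᶜ)` and `E_σᶜ = G(E_{b/√f}ᶜ)`.  The zero set of `σ` is
`{x ∈ G(ℝ) | b(H(x)) = 0} ∪ G(ℝ)ᶜ`; the singular sets `E_h` are formulated
via `[0,∞]`-valued integrands: `σ⁻² = f(H(·))²/b(H(·))²` on `G(ℝ)` (and `∞`
outside), and `(b/√f)⁻² = f/b²`. -/
theorem zero_and_singular_sets_transform
    (f : ℝ → ℝ) (hnn : ∀ x, 0 ≤ f x)
    (hrc : ∀ x, ContinuousWithinAt f (Set.Ici x) x)
    (hbv : LocallyBoundedVariationOn f Set.univ)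
    (hint : ∀ K : Set ℝ, IsCompact K →
      ∫⁻ x in K, (ENNReal.ofReal (f x))⁻¹ ∂volume < ⊤)
    (b : ℝ → ℝ) (hb : Measurable b)
    (H : ℝ → ℝ) (hH : ∀ t, H (primInv f t) = t) :
    ({x : ℝ | x ∈ Set.range (primInv f) ∧ b (H x) = 0} ∪
        (Set.range (primInv f))ᶜ)ᶜ = primInv f '' {x : ℝ | b x = 0}ᶜ ∧
    {x : ℝ | ∀ U : Set ℝ, IsOpen U → x ∈ U →
        ∫⁻ y in U,
          (if y ∈ Set.range (primInv f) then
            (ENNReal.ofReal (b (H y) ^ 2))⁻¹ * ENNReal.ofReal (f (H y) ^ 2)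
           else ⊤) ∂volume = ⊤}ᶜ
      = primInv f ''
        {x : ℝ | ∀ U : Set ℝ, IsOpen U → x ∈ U →
          ∫⁻ y in U,
            (ENNReal.ofReal (b y ^ 2))⁻¹ * ENNReal.ofReal (f y) ∂volume = ⊤}ᶜ := by
  have hf_meas : Measurable f := meas_of_bv hbv
  have hGinj : Function.Injective (primInv f) := fun a c h => by
    rw [← hH a, ← hH c, h]
  have hGs : StrictMono (primInv f) := (primInv_mono hint).strictMono_of_injective hGinj
  have hGcont : Continuous (primInv f) := primInv_continuous hint
  set G := primInv f with hG
  set Φ : ℝ → ℝ≥0∞ := fun y =>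
    if y ∈ Set.range G then
      (ENNReal.ofReal (b (H y) ^ 2))⁻¹ * ENNReal.ofReal (f (H y) ^ 2)
    else ⊤ with hΦdef
  set g : ℝ → ℝ≥0∞ := fun y =>
    (ENNReal.ofReal (b (H y) ^ 2))⁻¹ * ENNReal.ofReal (f (H y) ^ 2) with hgdef
  set ψ : ℝ → ℝ≥0∞ := fun t =>
    (ENNReal.ofReal (b t ^ 2))⁻¹ * ENNReal.ofReal (f t) with hψdef
  have hid : ∀ t : ℝ, (ENNReal.ofReal (f t))⁻¹ * g (G t) = ψ t := by
    intro t
    simp only [hgdef, hψdef, hH]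
    rcases eq_or_lt_of_le (hnn t) with h | h
    · rw [← h]; simp
    · have h0 : ENNReal.ofReal (f t) ≠ 0 := by simp [h]
      have htop : ENNReal.ofReal (f t) ≠ ⊤ := ENNReal.ofReal_ne_top
      rw [show (f t)^2 = f t * f t from pow_two (f t), ENNReal.ofReal_mul (hnn t)]
      calc (ENNReal.ofReal (f t))⁻¹ *
            ((ENNReal.ofReal (b t ^ 2))⁻¹ * (ENNReal.ofReal (f t) * ENNReal.ofReal (f t)))
          = (ENNReal.ofReal (b t ^ 2))⁻¹ * ENNReal.ofReal (f t) *
              ((ENNReal.ofReal (f t))⁻¹ * ENNReal.ofReal (f t)) := by ring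
        _ = (ENNReal.ofReal (b t ^ 2))⁻¹ * ENNReal.ofReal (f t) := by
            rw [ENNReal.inv_mul_cancel h0 htop, mul_one]
  -- key: for open U contained in the range, the integral of Φ transforms
  have hkey : ∀ V : Set ℝ, MeasurableSet V →
      ∫⁻ y in G '' V, g y ∂volume = ∫⁻ t in V, ψ t ∂volume := by
    intro V hV
    rw [subst_lemma hint hGs hf_meas hV g]
    exact lintegral_congr fun t => hid t
  constructor
  · ext x
    simp only [Set.mem_compl_iff, Set.mem_union, Set.mem_setOf_eq, Set.mem_image, not_or,
      not_not]
    constructor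
    · rintro ⟨h1, h2⟩
      obtain ⟨t, rfl⟩ := h2
      exact ⟨t, fun hbt => h1 ⟨⟨t, rfl⟩, by simpa [hH] using hbt⟩, rfl⟩
    · rintro ⟨t, hbt, rfl⟩
      exact ⟨fun h => hbt (by simpa [hH] using h.2), ⟨t, rfl⟩⟩
  · ext x
    simp only [Set.mem_compl_iff, Set.mem_setOf_eq, Set.mem_image]
    push_neg
    constructor
    · rintro ⟨U, hUopen, hxU, hUne⟩
      have hUsub : U ⊆ Set.range G := by
        intro y hyU
        by_contra hyr
        obtain ⟨ε, hε, hball⟩ := Metric.isOpen_iff.1 hUopen y hyU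
        obtain ⟨S, hSmeas, hSball, hSr, hSvol⟩ :=
          not_range_interval (f := f) hε hyr (range_ordConnected hint)
        apply hUne
        have h1 : ∫⁻ y in S, Φ y ∂volume = ⊤ := by
          have he : ∫⁻ y in S, Φ y ∂volume = ∫⁻ _ in S, (⊤ : ℝ≥0∞) ∂volume := by
            refine setLIntegral_congr_fun hSmeas ?_
            intro z hz
            simp only [hΦdef, if_neg (show z ∉ Set.range G from hSr z hz)]
          rw [he, setLIntegral_const, hSvol, ENNReal.top_mul]
          simp [hε]
        exact top_le_iff.1
          (h1 ▸ lintegral_mono_set (fun z hz => hball (hSball hz)))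
      obtain ⟨t, htx⟩ := hUsub hxU
      refine ⟨t, ⟨G ⁻¹' U, hUopen.preimage hGcont, by rw [Set.mem_preimage, htx]; exact hxU,
        ?_⟩, htx⟩
      have hVmeas : MeasurableSet (G ⁻¹' U) := hUopen.measurableSet.preimage hGcont.measurable
      have himg : G '' (G ⁻¹' U) = U := by
        rw [Set.image_preimage_eq_inter_range, Set.inter_eq_left.2 hUsub]
      rw [← hkey _ hVmeas, himg]
      intro hc
      apply hUne
      rw [← hc]
      refine setLIntegral_congr_fun hUopen.measurableSet ?_
      intro z hz
      simp only [hΦdef, hgdef, if_pos (hUsub hz)]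
    · rintro ⟨t, ⟨V, hVopen, htV, hVne⟩, htx⟩
      refine ⟨G '' V, primInv_isOpenMap hint hGs V hVopen, ⟨t, htV, htx⟩, ?_⟩
      have h1 : ∫⁻ y in G '' V, Φ y ∂volume = ∫⁻ y in G '' V, g y ∂volume := by
        have hVim : MeasurableSet (G '' V) :=
          (hGcont.measurableEmbedding hGinj).measurableSet_image' hVopen.measurableSet
        refine setLIntegral_congr_fun hVim ?_
        intro z hz
        simp only [hΦdef, hgdef, if_pos (Set.image_subset_range _ _ hz)]
      rw [h1, hkey _ hVopen.measurableSet]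
      exact hVne
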